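/- The energy distance between two finitely supported probability distributions on ℝ² is nonnegative: for X₁ uniform on a nonempty finite set A ⊆ ℝ² and X₂ uniform on a nonempty finite set B ⊆ ℝ², D(X₁,X₂) = 2·E‖X₁ − X₂‖ − E‖X₁ − X₁'‖ − E‖X₂ − X₂'‖ ≥ 0, where X₁', X₂' are independent copies and expectations are averages over the finite supports. -/

import Mathlib

open MeasureTheory Real intervalIntegral

lemma sq_diff_ind (a b t : ℝ) :
    ((if a ≤ t then (1:ℝ) else 0) - (if b ≤ t then 1 else 0))^2
      = (Set.Ico (min a b) (max a b)).indicator 1 t := by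
  rcases le_total a b with h | h <;>
    by_cases h1 : a ≤ t <;> by_cases h2 : b ≤ t <;>
      simp only [if_pos, if_neg, h1, h2, if_true, if_false, Set.indicator_apply,
        Set.mem_Ico, min_def, max_def, ite_true, ite_false] <;>
      split_ifs <;> simp_all <;> linarith

lemma abs_eq_int (a b : ℝ) :
    |a - b| = ∫ t, ((if a ≤ t then (1:ℝ) else 0) - (if b ≤ t then 1 else 0))^2 := by
  simp_rw [sq_diff_ind]
  rw [MeasureTheory.integral_indicator_one measurableSet_Ico]
  simp [Real.volume_Ico, max_sub_min_eq_abs, abs_sub_comm]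

lemma int_sq_diff (a b : ℝ) :
    Integrable (fun t => ((if a ≤ t then (1:ℝ) else 0) - (if b ≤ t then 1 else 0))^2) := by
  simp_rw [sq_diff_ind]
  rw [integrable_indicator_iff measurableSet_Ico]
  exact integrableOn_const measure_Ico_lt_top.ne (by simp)

lemma sum_sq_expand {ι : Type*} (s : Finset ι) (w g : ι → ℝ) (hw : ∑ i ∈ s, w i = 0) :
    ∑ i ∈ s, ∑ j ∈ s, w i * w j * (g i - g j)^2 = -2 * (∑ i ∈ s, w i * g i)^2 := by
  have h1 : ∀ i ∈ s, ∑ j ∈ s, w i * w j * (g i - g j)^2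
      = w i * (∑ j ∈ s, w j * (g j)^2)
        - (w i * g i) * (2 * (∑ j ∈ s, w j * g j)) := by
    intro i _
    have : ∀ j ∈ s, w i * w j * (g i - g j)^2
        = (w i * (g i)^2) * w j + (w i * (w j * (g j)^2)
          - (w i * g i) * (2 * (w j * g j))) := fun j _ => by ring
    rw [Finset.sum_congr rfl this, Finset.sum_add_distrib, Finset.sum_sub_distrib,
      ← Finset.mul_sum, hw, ← Finset.mul_sum, ← Finset.mul_sum, ← Finset.mul_sum]
    ring
  rw [Finset.sum_congr rfl h1, Finset.sum_sub_distrib, ← Finset.sum_mul, ← Finset.sum_mul,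
    hw]
  ring

lemma oneD {ι : Type*} (s : Finset ι) (w x : ι → ℝ) (hw : ∑ i ∈ s, w i = 0) :
    ∑ i ∈ s, ∑ j ∈ s, w i * w j * |x i - x j| ≤ 0 := by
  rw [← Finset.sum_product']
  have key : ∀ p : ι × ι, w p.1 * w p.2 * |x p.1 - x p.2|
      = ∫ t, w p.1 * w p.2 * ((if x p.1 ≤ t then (1:ℝ) else 0) - (if x p.2 ≤ t then 1 else 0))^2 := by
    intro p
    rw [MeasureTheory.integral_const_mul, ← abs_eq_int]
  simp_rw [key]
  rw [← integral_finset_sum _ (fun p _ => ((int_sq_diff (x p.1) (x p.2)).const_mul _))]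
  apply integral_nonpos
  intro t
  simp only [Pi.zero_apply]
  rw [Finset.sum_product]
  rw [sum_sq_expand s w (fun i => if x i ≤ t then (1:ℝ) else 0) hw]
  nlinarith [sq_nonneg (∑ i ∈ s, w i * (if x i ≤ t then (1:ℝ) else 0))]

lemma abs_cos_int : ∫ θ in (0:ℝ)..(2*π), |Real.cos θ| = 4 := by
  have hπ := pi_pos
  have hs : Real.sin (3*π/2) = -1 := by
    rw [show (3*π/2 : ℝ) = π + π/2 by ring, Real.sin_add]; simp
  have hs2 : Real.sin (2*π) = 0 := Real.sin_two_pi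
  have h1 : ∫ θ in (0:ℝ)..(π/2), |Real.cos θ| = 1 := by
    rw [intervalIntegral.integral_congr (g := Real.cos)]
    · simp [integral_cos]
    · intro θ hθ
      rw [Set.uIcc_of_le (by positivity)] at hθ
      exact abs_of_nonneg (Real.cos_nonneg_of_mem_Icc ⟨by linarith [hθ.1], hθ.2⟩)
  have h2 : ∫ θ in (π/2)..(3*π/2), |Real.cos θ| = 2 := by
    rw [intervalIntegral.integral_congr (g := fun θ => -Real.cos θ)]
    · rw [intervalIntegral.integral_neg, integral_cos, hs]
      norm_num
    · intro θ hθ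
      rw [Set.uIcc_of_le (by linarith)] at hθ
      exact abs_of_nonpos (Real.cos_nonpos_of_pi_div_two_le_of_le hθ.1 (by linarith [hθ.2]))
  have h3 : ∫ θ in (3*π/2)..(2*π), |Real.cos θ| = 1 := by
    rw [intervalIntegral.integral_congr (g := Real.cos)]
    · rw [integral_cos, hs, hs2]; norm_num
    · intro θ hθ
      rw [Set.uIcc_of_le (by linarith)] at hθ
      calc |Real.cos θ| = |Real.cos (θ - 2*π)| := by rw [Real.cos_sub_two_pi]
        _ = Real.cos (θ - 2*π) := abs_of_nonneg (Real.cos_nonneg_of_mem_Icc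
              (show θ - 2*π ∈ Set.Icc (-(π/2)) (π/2) from
                ⟨by linarith [hθ.1], by linarith [hθ.2]⟩))
        _ = Real.cos θ := Real.cos_sub_two_pi θ
  have hint : ∀ a b : ℝ, IntervalIntegrable (fun θ => |Real.cos θ|) volume a b :=
    fun a b => (Real.continuous_cos.abs).intervalIntegrable a b
  rw [← intervalIntegral.integral_add_adjacent_intervals (b := π/2) (hint _ _) (hint _ _),
    ← intervalIntegral.integral_add_adjacent_intervals (a := π/2) (b := 3*π/2) (hint _ _) (hint _ _),
    h1, h2, h3]
  norm_num

lemma proj_int (a b : ℝ) :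
    ∫ θ in (0:ℝ)..(2*π), |a * Real.cos θ + b * Real.sin θ| = 4 * Real.sqrt (a^2 + b^2) := by
  by_cases hz : a = 0 ∧ b = 0
  · simp [hz.1, hz.2]
  · set z : ℂ := ⟨a, b⟩ with hzdef
    have hz0 : z ≠ 0 := fun h => hz (by simpa [hzdef, Complex.ext_iff] using h)
    have habs : ‖z‖ = Real.sqrt (a^2 + b^2) := by
      rw [Complex.norm_def, Complex.normSq_mk] ; ring_nf
    set r := Real.sqrt (a^2 + b^2) with hr
    have hrpos : 0 < r := by
      rw [hr]
      have : a^2 + b^2 > 0 := by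
        rcases not_and_or.1 hz with h | h
        · positivity
        · positivity
      positivity
    have habs0 : ‖z‖ ≠ 0 := by rw [habs]; exact hrpos.ne'
    set φ := Complex.arg z with hφ
    have ha : a = r * Real.cos φ := by
      rw [hφ, Complex.cos_arg hz0, ← habs, mul_comm, div_mul_cancel₀ _ habs0]
    have hb : b = r * Real.sin φ := by
      rw [hφ, Complex.sin_arg, ← habs, mul_comm, div_mul_cancel₀ _ habs0]
    have key : ∀ θ : ℝ, |a * Real.cos θ + b * Real.sin θ| = r * |Real.cos (θ - φ)| := by
      intro θ
      rw [Real.cos_sub]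
      nth_rewrite 1 [ha, hb]
      rw [show r * Real.cos φ * Real.cos θ + r * Real.sin φ * Real.sin θ
          = r * (Real.cos θ * Real.cos φ + Real.sin θ * Real.sin φ) by ring,
        abs_mul, abs_of_pos hrpos]
    simp_rw [key]
    rw [intervalIntegral.integral_const_mul]
    have hper : Function.Periodic (fun x => |Real.cos x|) (2*π) := fun x => by
      simp [Real.cos_add_two_pi]
    rw [intervalIntegral.integral_comp_sub_right (fun x => |Real.cos x|) φ]
    have := hper.intervalIntegral_add_eq (-φ) 0
    rw [show (0:ℝ) - φ = -φ by ring, show (2*π) - φ = -φ + 2*π by ring, this,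
      zero_add, abs_cos_int]
    ring
lemma twoD {ι : Type*} (s : Finset ι) (w : ι → ℝ) (p : ι → EuclideanSpace ℝ (Fin 2))
    (hw : ∑ i ∈ s, w i = 0) :
    ∑ i ∈ s, ∑ j ∈ s, w i * w j * ‖p i - p j‖ ≤ 0 := by
  have hnorm : ∀ (v : EuclideanSpace ℝ (Fin 2)), ‖v‖ = Real.sqrt ((v 0)^2 + (v 1)^2) := by
    intro v
    rw [EuclideanSpace.norm_eq]
    simp [Fin.sum_univ_two, sq_abs]
  have key : ∀ i j : ι, w i * w j * ‖p i - p j‖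
      = (1/4) * ∫ θ in (0:ℝ)..(2*π), w i * w j *
          |(p i 0 * Real.cos θ + p i 1 * Real.sin θ)
            - (p j 0 * Real.cos θ + p j 1 * Real.sin θ)| := by
    intro i j
    rw [intervalIntegral.integral_const_mul]
    have h1 : ∀ θ : ℝ, (p i 0 * Real.cos θ + p i 1 * Real.sin θ)
        - (p j 0 * Real.cos θ + p j 1 * Real.sin θ)
        = (p i - p j) 0 * Real.cos θ + (p i - p j) 1 * Real.sin θ := by
      intro θ
      simp only [PiLp.sub_apply]
      ring
    simp_rw [h1]
    rw [proj_int, ← hnorm]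
    ring
  rw [← Finset.sum_product']
  simp_rw [key]
  rw [← Finset.mul_sum]
  have hint : ∀ q : ι × ι, IntervalIntegrable (fun θ => w q.1 * w q.2 *
      |(p q.1 0 * Real.cos θ + p q.1 1 * Real.sin θ)
        - (p q.2 0 * Real.cos θ + p q.2 1 * Real.sin θ)|) volume 0 (2*π) := by
    intro q
    apply Continuous.intervalIntegrable
    fun_prop
  rw [← intervalIntegral.integral_finset_sum (fun q _ => hint q)]
  have hpt : ∀ θ : ℝ, (∑ q ∈ s ×ˢ s, w q.1 * w q.2 *
      |(p q.1 0 * Real.cos θ + p q.1 1 * Real.sin θ)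
        - (p q.2 0 * Real.cos θ + p q.2 1 * Real.sin θ)|) ≤ 0 := by
    intro θ
    rw [Finset.sum_product]
    exact oneD s w (fun i => p i 0 * Real.cos θ + p i 1 * Real.sin θ) hw
  have : (∫ θ in (0:ℝ)..(2*π), ∑ q ∈ s ×ˢ s, w q.1 * w q.2 *
      |(p q.1 0 * Real.cos θ + p q.1 1 * Real.sin θ)
        - (p q.2 0 * Real.cos θ + p q.2 1 * Real.sin θ)|) ≤ 0 := by
    rw [intervalIntegral.integral_of_le (by positivity)]
    exact integral_nonpos fun θ => hpt θ
  nlinarith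

lemma double_sum_ite {ι : Type*} [DecidableEq ι] (s A B : Finset ι) (hA : A ⊆ s) (hB : B ⊆ s)
    (a b : ℝ) (f : ι → ι → ℝ) :
    ∑ i ∈ s, ∑ j ∈ s, (if i ∈ A then a else 0) * (if j ∈ B then b else 0) * f i j
      = a * b * ∑ i ∈ A, ∑ j ∈ B, f i j := by
  have step1 : ∀ i ∈ s, ∑ j ∈ s, (if i ∈ A then a else 0) * (if j ∈ B then b else 0) * f i j
      = (if i ∈ A then (∑ j ∈ s, if j ∈ B then a * b * f i j else 0) else 0) := by
    intro i _
    by_cases hi : i ∈ A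
    · simp only [hi, if_true]
      refine Finset.sum_congr rfl fun j _ => ?_
      by_cases hj : j ∈ B <;> simp [hj]
    · simp [hi]
  rw [Finset.sum_congr rfl step1, Finset.sum_ite_mem,
    Finset.inter_eq_right.mpr hA]
  rw [Finset.mul_sum]
  refine Finset.sum_congr rfl fun i _ => ?_
  rw [Finset.sum_ite_mem, Finset.inter_eq_right.mpr hB, Finset.mul_sum]

theorem energy_distance_nonneg (A B : Finset (EuclideanSpace ℝ (Fin 2)))
    (hA : A.Nonempty) (hB : B.Nonempty) :
    0 ≤ 2 * ((1 / ((A.card : ℝ) * (B.card : ℝ))) *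
        ∑ a ∈ A, ∑ b ∈ B, ‖a - b‖)
      - (1 / ((A.card : ℝ) ^ 2)) * ∑ a ∈ A, ∑ a' ∈ A, ‖a - a'‖
      - (1 / ((B.card : ℝ) ^ 2)) * ∑ b ∈ B, ∑ b' ∈ B, ‖b - b'‖ := by
  classical
  have hcA : (0:ℝ) < A.card := by exact_mod_cast Finset.card_pos.mpr hA
  have hcB : (0:ℝ) < B.card := by exact_mod_cast Finset.card_pos.mpr hB
  set a : ℝ := (A.card : ℝ)⁻¹ with ha
  set b : ℝ := (B.card : ℝ)⁻¹ with hb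
  set s : Finset (EuclideanSpace ℝ (Fin 2)) := A ∪ B with hs
  set w : EuclideanSpace ℝ (Fin 2) → ℝ := fun x => (if x ∈ A then a else 0) - (if x ∈ B then b else 0) with hwdef
  have hsubA : A ⊆ s := Finset.subset_union_left
  have hsubB : B ⊆ s := Finset.subset_union_right
  have hsumA : ∑ x ∈ s, (if x ∈ A then a else 0) = 1 := by
    rw [Finset.sum_ite_mem, Finset.inter_eq_right.mpr hsubA, Finset.sum_const,
      nsmul_eq_mul, ha, mul_inv_cancel₀ hcA.ne']
  have hsumB : ∑ x ∈ s, (if x ∈ B then b else 0) = 1 := by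
    rw [Finset.sum_ite_mem, Finset.inter_eq_right.mpr hsubB, Finset.sum_const,
      nsmul_eq_mul, hb, mul_inv_cancel₀ hcB.ne']
  have hw : ∑ x ∈ s, w x = 0 := by
    rw [hwdef, Finset.sum_sub_distrib, hsumA, hsumB, sub_self]
  have hkey := twoD s w id hw
  simp only [id] at hkey
  have expand : ∀ i j : EuclideanSpace ℝ (Fin 2), w i * w j * ‖i - j‖
      = (if i ∈ A then a else 0) * (if j ∈ A then a else 0) * ‖i - j‖
        + (if i ∈ B then b else 0) * (if j ∈ B then b else 0) * ‖i - j‖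
        - (if i ∈ A then a else 0) * (if j ∈ B then b else 0) * ‖i - j‖
        - (if i ∈ B then b else 0) * (if j ∈ A then a else 0) * ‖i - j‖ := by
    intro i j
    rw [hwdef]
    ring
  have hsplit : ∑ i ∈ s, ∑ j ∈ s, w i * w j * ‖i - j‖
      = a * a * (∑ i ∈ A, ∑ j ∈ A, ‖i - j‖)
        + b * b * (∑ i ∈ B, ∑ j ∈ B, ‖i - j‖)
        - a * b * (∑ i ∈ A, ∑ j ∈ B, ‖i - j‖)
        - b * a * (∑ i ∈ B, ∑ j ∈ A, ‖i - j‖) := by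
    simp_rw [expand]
    simp only [Finset.sum_sub_distrib, Finset.sum_add_distrib]
    rw [double_sum_ite s A A hsubA hsubA a a (fun i j => ‖i - j‖),
      double_sum_ite s B B hsubB hsubB b b (fun i j => ‖i - j‖),
      double_sum_ite s A B hsubA hsubB a b (fun i j => ‖i - j‖),
      double_sum_ite s B A hsubB hsubA b a (fun i j => ‖i - j‖)]
  have hsym : ∑ i ∈ B, ∑ j ∈ A, ‖i - j‖ = ∑ i ∈ A, ∑ j ∈ B, ‖i - j‖ := by
    rw [Finset.sum_comm]
    exact Finset.sum_congr rfl fun i _ => Finset.sum_congr rfl fun j _ => norm_sub_rev _ _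
  rw [hsplit, hsym] at hkey
  have h1 : 1 / ((A.card : ℝ) * (B.card : ℝ)) = a * b := by
    rw [ha, hb, one_div, mul_inv]
  have h2 : 1 / ((A.card : ℝ) ^ 2) = a * a := by
    rw [ha, one_div, sq, mul_inv]
  have h3 : 1 / ((B.card : ℝ) ^ 2) = b * b := by
    rw [hb, one_div, sq, mul_inv]
  rw [h1, h2, h3]
  linarith
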